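/- For every m ≥ 1, the kernel of the natural surjection mod Φ_m : ℤ̂[[t^ℤ̂]] → ℤ̂[t]/(Φ_m(t)) equals the principal ideal of ℤ̂[[t^ℤ̂]] generated by Φ_m(t). -/

import Mathlib

open Polynomial

set_option synthInstance.maxHeartbeats 1000000
set_option maxHeartbeats 1000000

noncomputable section
noncomputable section

/-- The ring of profinite integers `ẐZ = lim_n ℤ/nℤ`, realized as the subring of
`∏ n : ℕ+, ZMod n` consisting of families compatible under the natural projections. -/
def ZHatSubring : Subring (∀ n : ℕ+, ZMod n) where
  carrier := {f | ∀ (m n : ℕ+) (h : (m : ℕ) ∣ (n : ℕ)), ZMod.castHom h (ZMod m) (f n) = f m}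
  mul_mem' := fun {a b} ha hb m n h => by
    simp only [Pi.mul_apply, map_mul, ha m n h, hb m n h]
  one_mem' := fun m n h => map_one _
  add_mem' := fun {a b} ha hb m n h => by
    simp only [Pi.add_apply, map_add, ha m n h, hb m n h]
  zero_mem' := fun m n h => map_zero _
  neg_mem' := fun {a} ha m n h => by
    simp only [Pi.neg_apply, map_neg, ha m n h]

/-- The profinite integers as a type. -/
abbrev ZHat : Type := ZHatSubring

instance : CommRing ZHat := inferInstance

/-- The quotient ring `R[t]/(tⁿ - 1)`. -/
abbrev CycModN (R : Type) [CommRing R] (n : ℕ+) : Type :=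
  Polynomial R ⧸ Ideal.span {(X : Polynomial R) ^ (n : ℕ) - 1}

lemma X_pow_sub_one_dvd {R : Type} [CommRing R] {m n : ℕ} (h : m ∣ n) :
    (X : Polynomial R) ^ m - 1 ∣ (X : Polynomial R) ^ n - 1 := by
  obtain ⟨k, rfl⟩ := h
  simpa [pow_mul] using sub_dvd_pow_sub_pow ((X : Polynomial R) ^ m) 1 k

/-- The natural transition map `R[t]/(tⁿ-1) → R[t]/(tᵐ-1)` for `m ∣ n`. -/
def cycTransition (R : Type) [CommRing R] {m n : ℕ+} (h : (m : ℕ) ∣ (n : ℕ)) :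
    CycModN R n →+* CycModN R m :=
  Ideal.Quotient.factor
    (Ideal.span_singleton_le_span_singleton.mpr (X_pow_sub_one_dvd h))

/-- The completed group ring `R[[t^Ẑ]] = lim_n R[t]/(tⁿ-1)`, realized as the subring of
`∏ n : ℕ+, R[t]/(tⁿ-1)` of families compatible under the transition maps. -/
def CompletedCycRing (R : Type) [CommRing R] : Subring (∀ n : ℕ+, CycModN R n) where
  carrier := {f | ∀ (m n : ℕ+) (h : (m : ℕ) ∣ (n : ℕ)), cycTransition R h (f n) = f m}
  mul_mem' := fun {a b} ha hb m n h => by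
    simp only [Pi.mul_apply, map_mul, ha m n h, hb m n h]
  one_mem' := fun m n h => map_one _
  add_mem' := fun {a b} ha hb m n h => by
    simp only [Pi.add_apply, map_add, ha m n h, hb m n h]
  zero_mem' := fun m n h => map_zero _
  neg_mem' := fun {a} ha m n h => by
    simp only [Pi.neg_apply, map_neg, ha m n h]

instance completedCycRingCommRing (R : Type) [CommRing R] :
    CommRing (CompletedCycRing R) := inferInstance

/-- The natural ring homomorphism `R[t] → R[[t^Ẑ]]`, `f ↦ (f mod (tⁿ-1))ₙ`. -/
def polyToCompleted (R : Type) [CommRing R] : Polynomial R →+* CompletedCycRing R :=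
  RingHom.codRestrict (Pi.ringHom fun n => Ideal.Quotient.mk _) _
    (fun f m n h => by
      first | rfl | simp [cycTransition, RingHom.pi_apply, Ideal.Quotient.factor_mk])

/-- The natural ring homomorphism `ℤ[t] → R[[t^Ẑ]]`. -/
def intPolyEmb (R : Type) [CommRing R] : Polynomial ℤ →+* CompletedCycRing R :=
  (polyToCompleted R).comp (Polynomial.mapRingHom (Int.castRingHom R))


/-- The natural map `mod Φ_m : R[[t^Ẑ]] → R[t]/(Φ_m(t))`, obtained as the composite
`R[[t^Ẑ]] → R[t]/(tᵐ-1) → R[t]/(Φ_m(t))`. -/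
def modPhi (R : Type) [CommRing R] (m : ℕ+) :
    CompletedCycRing R →+* Polynomial R ⧸ Ideal.span {Polynomial.cyclotomic (m : ℕ) R} :=
  (Ideal.Quotient.factor (Ideal.span_singleton_le_span_singleton.mpr
      (Polynomial.cyclotomic.dvd_X_pow_sub_one (m : ℕ) R))).comp
    ((Pi.evalRingHom _ m).comp (CompletedCycRing R).subtype)
namespace KerModPhiAux

open Ideal

/-- Shorthand for the quotient map `R[X] → R[X]/(X^k-1)`. -/
def mkC (R : Type) [CommRing R] (k : ℕ+) : Polynomial R →+* CycModN R k :=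
  Ideal.Quotient.mk _

lemma mkC_surjective (R : Type) [CommRing R] (k : ℕ+) :
    Function.Surjective (mkC R k) :=
  Ideal.Quotient.mk_surjective

lemma monic_d (R : Type) [CommRing R] (k : ℕ+) :
    ((X : Polynomial R) ^ (k : ℕ) - 1).Monic := by
  have : ((X : Polynomial R) ^ (k : ℕ) - C 1).Monic :=
    monic_X_pow_sub_C (1 : R) k.ne_zero
  simpa using this

lemma mkC_eq_mkC_iff {R : Type} [CommRing R] {k : ℕ+} (p q : Polynomial R) :
    mkC R k p = mkC R k q ↔ ((X : Polynomial R) ^ (k : ℕ) - 1) ∣ (p - q) := by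
  rw [mkC, Ideal.Quotient.eq, Ideal.mem_span_singleton]

/-- `cycTransition` on `mkC`. -/
lemma cycTransition_mkC {R : Type} [CommRing R] {k k' : ℕ+} (h : (k : ℕ) ∣ (k' : ℕ))
    (p : Polynomial R) : cycTransition R h (mkC R k' p) = mkC R k p :=
  Ideal.Quotient.factor_mk _ _

/-- The map `R[X]/(X^k-1) → S[X]/(X^k-1)` induced by a ring hom `σ : R → S`. -/
def qmap {R S : Type} [CommRing R] [CommRing S] (σ : R →+* S) (k : ℕ+) :
    CycModN R k →+* CycModN S k :=
  Ideal.quotientMap _ (Polynomial.mapRingHom σ) (by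
    rw [Ideal.span_le]
    rintro x rfl
    simp only [SetLike.mem_coe, Ideal.mem_comap, Polynomial.coe_mapRingHom,
      Polynomial.map_sub, Polynomial.map_pow, Polynomial.map_X, Polynomial.map_one]
    exact Ideal.subset_span rfl)

lemma qmap_mkC {R S : Type} [CommRing R] [CommRing S] (σ : R →+* S) (k : ℕ+)
    (p : Polynomial R) : qmap σ k (mkC R k p) = mkC S k (p.map σ) :=
  Ideal.quotientMap_mk

lemma qmap_qmap {R S T : Type} [CommRing R] [CommRing S] [CommRing T]
    (σ : R →+* S) (τ : S →+* T) (k : ℕ+) (x : CycModN R k) :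
    qmap τ k (qmap σ k x) = qmap (τ.comp σ) k x := by
  obtain ⟨p, rfl⟩ := mkC_surjective R k x
  rw [qmap_mkC, qmap_mkC, qmap_mkC, Polynomial.map_map]

lemma cycTransition_qmap {R S : Type} [CommRing R] [CommRing S] (σ : R →+* S)
    {k k' : ℕ+} (h : (k : ℕ) ∣ (k' : ℕ)) (x : CycModN R k') :
    cycTransition S h (qmap σ k' x) = qmap σ k (cycTransition R h x) := by
  obtain ⟨p, rfl⟩ := mkC_surjective R k' x
  rw [qmap_mkC, cycTransition_mkC, cycTransition_mkC, qmap_mkC]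

/-- The canonical representative of degree `< k`. -/
def rep {R : Type} [CommRing R] {k : ℕ+} (x : CycModN R k) : Polynomial R :=
  Function.surjInv (mkC_surjective R k) x %ₘ ((X : Polynomial R) ^ (k : ℕ) - 1)

lemma mkC_modByMonic {R : Type} [CommRing R] (k : ℕ+) (p : Polynomial R) :
    mkC R k (p %ₘ ((X : Polynomial R) ^ (k : ℕ) - 1)) = mkC R k p := by
  rw [mkC_eq_mkC_iff]
  have h := Polynomial.modByMonic_add_div p ((X : Polynomial R) ^ (k : ℕ) - 1)
  have h2 : p %ₘ ((X : Polynomial R) ^ (k : ℕ) - 1) - p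
      = -(((X : Polynomial R) ^ (k : ℕ) - 1) * (p /ₘ ((X : Polynomial R) ^ (k : ℕ) - 1))) := by
    linear_combination h
  rw [h2]
  exact dvd_neg.mpr (dvd_mul_right _ _)

lemma mkC_rep {R : Type} [CommRing R] {k : ℕ+} (x : CycModN R k) :
    mkC R k (rep x) = x := by
  rw [rep, mkC_modByMonic, Function.surjInv_eq (mkC_surjective R k) x]

lemma degree_rep_lt {R : Type} [CommRing R] [Nontrivial R] {k : ℕ+} (x : CycModN R k) :
    (rep x).degree < ((k : ℕ) : WithBot ℕ) := by
  have h := Polynomial.degree_modByMonic_lt (Function.surjInv (mkC_surjective R k) x)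
    (monic_d R k)
  have hd : ((X : Polynomial R) ^ (k : ℕ) - 1).degree = ((k : ℕ) : WithBot ℕ) := by
    have : ((X : Polynomial R) ^ (k : ℕ) - C 1).degree = ((k : ℕ) : WithBot ℕ) :=
      Polynomial.degree_X_pow_sub_C k.pos 1
    simpa using this
  rw [← hd]
  exact h

lemma natDegree_rep_lt {R : Type} [CommRing R] [Nontrivial R] {k : ℕ+} (x : CycModN R k) :
    (rep x).natDegree < (k : ℕ) := by
  rcases eq_or_ne (rep x) 0 with h | h
  · rw [h]; simpa using k.pos
  · exact (Polynomial.natDegree_lt_iff_degree_lt h).mpr (degree_rep_lt x)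

lemma rep_mkC_of_degree_lt {R : Type} [CommRing R] [Nontrivial R] {k : ℕ+}
    (p : Polynomial R) (hp : p.degree < ((k : ℕ) : WithBot ℕ)) : rep (mkC R k p) = p := by
  set d : Polynomial R := (X : Polynomial R) ^ (k : ℕ) - 1 with hdd
  have hd : d.degree = ((k : ℕ) : WithBot ℕ) := by
    have : ((X : Polynomial R) ^ (k : ℕ) - C 1).degree = ((k : ℕ) : WithBot ℕ) :=
      Polynomial.degree_X_pow_sub_C k.pos 1
    simpa [hdd] using this
  have h1 : mkC R k (Function.surjInv (mkC_surjective R k) (mkC R k p)) = mkC R k p :=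
    Function.surjInv_eq (mkC_surjective R k) _
  have h2 : d ∣ (Function.surjInv (mkC_surjective R k) (mkC R k p) - p) :=
    (mkC_eq_mkC_iff _ _).mp h1
  have h3 : (Function.surjInv (mkC_surjective R k) (mkC R k p) - p) %ₘ d = 0 :=
    (Polynomial.modByMonic_eq_zero_iff_dvd (monic_d R k)).mpr h2
  have h4 := Polynomial.sub_modByMonic (Function.surjInv (mkC_surjective R k) (mkC R k p)) p d
  rw [h3] at h4
  have h5 : p %ₘ d = p := (Polynomial.modByMonic_eq_self_iff (monic_d R k)).mpr (hd ▸ hp)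
  have h6 : Function.surjInv (mkC_surjective R k) (mkC R k p) %ₘ d = p := by
    exact (eq_of_sub_eq_zero h4.symm).trans h5
  exact h6

lemma map_rep {R S : Type} [CommRing R] [CommRing S] (σ : R →+* S) {k : ℕ+}
    (x : CycModN R k) : (rep x).map σ = rep (qmap σ k x) := by
  rcases subsingleton_or_nontrivial S with hS | hS
  · exact Subsingleton.elim _ _
  · haveI : Nontrivial R := σ.domain_nontrivial
    have h1 : qmap σ k x = mkC S k ((rep x).map σ) := by
      rw [← mkC_rep x, qmap_mkC, mkC_rep]
    rw [h1, rep_mkC_of_degree_lt]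
    exact lt_of_le_of_lt (Polynomial.degree_map_le) (degree_rep_lt x)

/-- The projection `ZHat → ZMod N`. -/
def proj (N : ℕ+) : ZHat →+* ZMod N :=
  (Pi.evalRingHom _ N).comp ZHatSubring.subtype

lemma proj_apply (N : ℕ+) (x : ZHat) : proj N x = x.1 N := rfl

lemma castHom_comp_proj {N N' : ℕ+} (h : (N : ℕ) ∣ (N' : ℕ)) :
    (ZMod.castHom h (ZMod N)).comp (proj N') = proj N := by
  ext x
  exact x.2 N N' h

lemma zhat_poly_eq_zero {p : Polynomial ZHat} (h : ∀ N : ℕ+, p.map (proj N) = 0) :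
    p = 0 := by
  ext i N
  have h2 := congrArg (fun q => Polynomial.coeff q i) (h N)
  simp only [Polynomial.coeff_map, Polynomial.coeff_zero] at h2
  show (p.coeff i).1 N = ((0 : Polynomial ZHat).coeff i).1 N
  rw [Polynomial.coeff_zero]
  exact h2

lemma dvd_of_forall_proj (k : ℕ+) {p : Polynomial ZHat}
    (h : ∀ N : ℕ+, ((X : Polynomial (ZMod N)) ^ (k : ℕ) - 1) ∣ p.map (proj N)) :
    ((X : Polynomial ZHat) ^ (k : ℕ) - 1) ∣ p := by
  rw [← Polynomial.modByMonic_eq_zero_iff_dvd (monic_d ZHat k)]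
  apply zhat_poly_eq_zero
  intro N
  rw [Polynomial.map_modByMonic _ (monic_d ZHat k)]
  have hd : ((X : Polynomial ZHat) ^ (k : ℕ) - 1).map (proj N)
      = ((X : Polynomial (ZMod N)) ^ (k : ℕ) - 1) := by
    simp
  rw [hd]
  exact (Polynomial.modByMonic_eq_zero_iff_dvd (monic_d (ZMod N) k)).mpr (h N)

/-- The image of the cyclotomic polynomial in `R[X]/(X^k-1)`. -/
def PhiQ (R : Type) [CommRing R] (m k : ℕ+) : CycModN R k :=
  mkC R k ((cyclotomic (m : ℕ) ℤ).map (Int.castRingHom R))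

lemma qmap_PhiQ {R S : Type} [CommRing R] [CommRing S] (σ : R →+* S) (m k : ℕ+) :
    qmap σ k (PhiQ R m k) = PhiQ S m k := by
  rw [PhiQ, qmap_mkC, Polynomial.map_map, PhiQ]
  have h : σ.comp (Int.castRingHom R) = Int.castRingHom S := RingHom.ext_int _ _
  rw [h]

lemma cycTransition_PhiQ (R : Type) [CommRing R] (m : ℕ+) {k k' : ℕ+}
    (h : (k : ℕ) ∣ (k' : ℕ)) : cycTransition R h (PhiQ R m k') = PhiQ R m k :=
  cycTransition_mkC h _

/-- Transition maps of the doubly-indexed system. -/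
def Tmap {k k' N N' : ℕ+} (hk : (k : ℕ) ∣ (k' : ℕ)) (hN : (N : ℕ) ∣ (N' : ℕ)) :
    CycModN (ZMod N') k' →+* CycModN (ZMod N) k :=
  (cycTransition (ZMod N) hk).comp (qmap (ZMod.castHom hN (ZMod N)) k')

lemma Tmap_mkC {k k' N N' : ℕ+} (hk : (k : ℕ) ∣ (k' : ℕ)) (hN : (N : ℕ) ∣ (N' : ℕ))
    (p : Polynomial (ZMod N')) :
    Tmap hk hN (mkC (ZMod N') k' p) = mkC (ZMod N) k (p.map (ZMod.castHom hN (ZMod N))) := by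
  rw [Tmap, RingHom.comp_apply, qmap_mkC, cycTransition_mkC]

lemma castHom_refl_map {N : ℕ+} (hN : (N : ℕ) ∣ (N : ℕ)) (p : Polynomial (ZMod N)) :
    p.map (ZMod.castHom hN (ZMod N)) = p := by
  have : ZMod.castHom hN (ZMod N) = RingHom.id (ZMod N) := by
    ext x; simp
  rw [this, Polynomial.map_id]

lemma Tmap_self_level {k k' N : ℕ+} (hk : (k : ℕ) ∣ (k' : ℕ)) (hN : (N : ℕ) ∣ (N : ℕ))
    (x : CycModN (ZMod N) k') : Tmap hk hN x = cycTransition (ZMod N) hk x := by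
  obtain ⟨p, rfl⟩ := mkC_surjective _ k' x
  rw [Tmap_mkC, castHom_refl_map, cycTransition_mkC]

lemma Tmap_self_N {k N N' : ℕ+} (hk : (k : ℕ) ∣ (k : ℕ)) (hN : (N : ℕ) ∣ (N' : ℕ))
    (x : CycModN (ZMod N') k) : Tmap hk hN x = qmap (ZMod.castHom hN (ZMod N)) k x := by
  obtain ⟨p, rfl⟩ := mkC_surjective _ k x
  rw [Tmap_mkC, qmap_mkC]
/-- Index type for the doubly-indexed inverse system. -/
structure Idx : Type where
  k : ℕ+
  N : ℕ+

instance : Preorder Idx where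
  le a b := ((a.k : ℕ) ∣ (b.k : ℕ)) ∧ ((a.N : ℕ) ∣ (b.N : ℕ))
  le_refl a := ⟨dvd_rfl, dvd_rfl⟩
  le_trans a b c h1 h2 := ⟨h1.1.trans h2.1, h1.2.trans h2.2⟩

lemma Idx.le_def {a b : Idx} : a ≤ b ↔ ((a.k : ℕ) ∣ (b.k : ℕ)) ∧ ((a.N : ℕ) ∣ (b.N : ℕ)) :=
  Iff.rfl

instance : IsDirected Idx (· ≤ ·) :=
  ⟨fun a b => ⟨⟨a.k * b.k, a.N * b.N⟩,
    ⟨by constructor <;> simp [PNat.mul_coe, dvd_mul_right],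
     by constructor <;> simp [PNat.mul_coe, dvd_mul_left]⟩⟩⟩

instance : Nonempty Idx := ⟨⟨1, 1⟩⟩

instance finite_cycModN (N k : ℕ+) : Finite (CycModN (ZMod N) k) := by
  rcases subsingleton_or_nontrivial (ZMod N) with hS | hS
  · haveI : Subsingleton (Polynomial (ZMod N)) :=
      ⟨fun a b => by ext i; exact Subsingleton.elim _ _⟩
    haveI : Subsingleton (CycModN (ZMod N) k) :=
      (mkC_surjective (ZMod N) k).subsingleton
    exact Finite.of_subsingleton
  · apply Finite.of_surjective
      (fun c : Fin (k : ℕ) → ZMod N =>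
        mkC (ZMod N) k (∑ i : Fin (k : ℕ), Polynomial.monomial (i : ℕ) (c i)))
    intro x
    refine ⟨fun i => (rep x).coeff i, ?_⟩
    have hdeg : (rep x).natDegree < (k : ℕ) := natDegree_rep_lt x
    have hsum : (∑ i : Fin (k : ℕ), Polynomial.monomial (i : ℕ) ((rep x).coeff i)) = rep x := by
      rw [Fin.sum_univ_eq_sum_range (fun i => Polynomial.monomial i ((rep x).coeff i))]
      exact ((rep x).as_sum_range' (k : ℕ) hdeg).symm
    show mkC (ZMod N) k (∑ i : Fin (k : ℕ), Polynomial.monomial (i : ℕ) ((rep x).coeff i)) = x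
    rw [hsum, mkC_rep]

/-- Solvability over `ZHat` at every level, given `modPhi f = 0`. -/
lemma exists_sol_zhat (m : ℕ+) (f : CompletedCycRing ZHat) (hf : modPhi ZHat m f = 0)
    (k : ℕ+) : ∃ q : CycModN ZHat k, PhiQ ZHat m k * q = f.1 k := by
  have hm' : (m : ℕ) ∣ ((k * m : ℕ+) : ℕ) := by simp [PNat.mul_coe, dvd_mul_left]
  have hk' : (k : ℕ) ∣ ((k * m : ℕ+) : ℕ) := by simp [PNat.mul_coe, dvd_mul_right]
  obtain ⟨F, hF⟩ := mkC_surjective ZHat (k * m) (f.1 (k * m))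
  have hfm : f.1 m = mkC ZHat m F := by
    rw [← f.2 m (k * m) hm', ← hF, cycTransition_mkC]
  have hker : Ideal.Quotient.mk (Ideal.span {cyclotomic (m : ℕ) ZHat}) F = 0 := by
    have : modPhi ZHat m f
        = Ideal.Quotient.factor (Ideal.span_singleton_le_span_singleton.mpr
            (Polynomial.cyclotomic.dvd_X_pow_sub_one (m : ℕ) ZHat)) (f.1 m) := rfl
    rw [this, hfm] at hf
    rw [← hf]
    exact (Ideal.Quotient.factor_mk _ _).symm
  have hmem : F ∈ Ideal.span {cyclotomic (m : ℕ) ZHat} :=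
    (Ideal.Quotient.eq_zero_iff_mem).mp hker
  obtain ⟨Q, hQ⟩ := Ideal.mem_span_singleton.mp hmem
  refine ⟨mkC ZHat k Q, ?_⟩
  have hfk : f.1 k = mkC ZHat k F := by
    rw [← f.2 k (k * m) hk', ← hF, cycTransition_mkC]
  rw [hfk, hQ, PhiQ, Polynomial.map_cyclotomic_int, ← _root_.map_mul]

/-- The solution set at a given index. -/
def SolSet (m : ℕ+) (f : CompletedCycRing ZHat) (i : Idx) : Type :=
  {q : CycModN (ZMod i.N) i.k // PhiQ (ZMod i.N) m i.k * q = qmap (proj i.N) i.k (f.1 i.k)}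

instance solSet_finite (m : ℕ+) (f : CompletedCycRing ZHat) (i : Idx) :
    Finite (SolSet m f i) :=
  Subtype.finite

lemma solSet_nonempty (m : ℕ+) (f : CompletedCycRing ZHat) (hf : modPhi ZHat m f = 0)
    (i : Idx) : Nonempty (SolSet m f i) := by
  obtain ⟨q, hq⟩ := exists_sol_zhat m f hf i.k
  refine ⟨⟨qmap (proj i.N) i.k q, ?_⟩⟩
  rw [← qmap_PhiQ (proj i.N) m i.k, ← _root_.map_mul, hq]

open CategoryTheory in
/-- The inverse system of solution sets. -/
def SolFunctor (m : ℕ+) (f : CompletedCycRing ZHat) : Idxᵒᵖ ⥤ Type where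
  obj i := SolSet m f i.unop
  map {j i} h := TypeCat.ofHom fun q =>
    ⟨Tmap (leOfHom h.unop).1 (leOfHom h.unop).2 q.1, by
      have h1 : Tmap (leOfHom h.unop).1 (leOfHom h.unop).2
            (PhiQ (ZMod j.unop.N) m j.unop.k * q.1)
          = PhiQ (ZMod i.unop.N) m i.unop.k
            * Tmap (leOfHom h.unop).1 (leOfHom h.unop).2 q.1 := by
        rw [_root_.map_mul]
        congr 1
        rw [Tmap, RingHom.comp_apply, qmap_PhiQ, cycTransition_PhiQ]
      have h2 : Tmap (leOfHom h.unop).1 (leOfHom h.unop).2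
            (qmap (proj j.unop.N) j.unop.k (f.1 j.unop.k))
          = qmap (proj i.unop.N) i.unop.k (f.1 i.unop.k) := by
        rw [Tmap, RingHom.comp_apply, qmap_qmap, castHom_comp_proj (leOfHom h.unop).2,
          cycTransition_qmap, f.2 i.unop.k j.unop.k (leOfHom h.unop).1]
      calc PhiQ (ZMod i.unop.N) m i.unop.k
            * Tmap (leOfHom h.unop).1 (leOfHom h.unop).2 q.1
          = Tmap (leOfHom h.unop).1 (leOfHom h.unop).2
              (PhiQ (ZMod j.unop.N) m j.unop.k * q.1) := h1.symm
        _ = Tmap (leOfHom h.unop).1 (leOfHom h.unop).2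
              (qmap (proj j.unop.N) j.unop.k (f.1 j.unop.k)) := by rw [q.2]
        _ = qmap (proj i.unop.N) i.unop.k (f.1 i.unop.k) := h2⟩
  map_id i := by
    ext q
    apply Subtype.ext
    obtain ⟨p, hp⟩ := mkC_surjective _ i.unop.k q.1
    show Tmap _ _ q.1 = q.1
    rw [← hp, Tmap_mkC, castHom_refl_map]
  map_comp {i j l} g h := by
    ext q
    apply Subtype.ext
    obtain ⟨p, hp⟩ := mkC_surjective _ i.unop.k q.1
    show Tmap _ _ q.1 = Tmap _ _ (Tmap _ _ q.1)
    rw [← hp, Tmap_mkC, Tmap_mkC, Tmap_mkC, Polynomial.map_map, ZMod.castHom_comp]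
lemma intPolyEmb_apply_coe (R : Type) [CommRing R] (p : Polynomial ℤ) (k : ℕ+) :
    (intPolyEmb R p).1 k = mkC R k (p.map (Int.castRingHom R)) := rfl

open CategoryTheory in
lemma main_construction (m : ℕ+) (f : CompletedCycRing ZHat) (hf : modPhi ZHat m f = 0) :
    ∃ g : CompletedCycRing ZHat, (f : CompletedCycRing ZHat)
      = intPolyEmb ZHat (cyclotomic (m : ℕ) ℤ) * g := by
  haveI h1 : ∀ j : Idxᵒᵖ, Finite ((SolFunctor m f).obj j) :=
    fun j => solSet_finite m f j.unop
  haveI h2 : ∀ j : Idxᵒᵖ, Nonempty ((SolFunctor m f).obj j) :=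
    fun j => solSet_nonempty m f hf j.unop
  obtain ⟨u, hu⟩ := nonempty_sections_of_finite_inverse_system (SolFunctor m f)
  set q : ∀ (k N : ℕ+), CycModN (ZMod N) k :=
    fun k N => (u (Opposite.op ⟨k, N⟩)).1 with hq_def
  have hcompat : ∀ (k k' N N' : ℕ+) (hk : (k : ℕ) ∣ (k' : ℕ)) (hN : (N : ℕ) ∣ (N' : ℕ)),
      Tmap hk hN (q k' N') = q k N := by
    intro k k' N N' hk hN
    have hle : (⟨k, N⟩ : Idx) ≤ ⟨k', N'⟩ := ⟨hk, hN⟩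
    exact congrArg Subtype.val (hu ((homOfLE hle).op))
  have hsol : ∀ (k N : ℕ+), PhiQ (ZMod N) m k * q k N = qmap (proj N) k (f.1 k) :=
    fun k N => (u (Opposite.op ⟨k, N⟩)).2
  -- the coefficients over ZHat
  have ha : ∀ (k : ℕ+) (i : ℕ), ∃ x : ZHat, ∀ N : ℕ+, x.1 N = (rep (q k N)).coeff i := by
    intro k i
    refine ⟨⟨fun N => (rep (q k N)).coeff i, ?_⟩, fun N => rfl⟩
    intro N N' hN
    have hqq : qmap (ZMod.castHom hN (ZMod N)) k (q k N') = q k N := by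
      rw [← Tmap_self_N dvd_rfl hN (q k N')]
      exact hcompat k k N N' dvd_rfl hN
    calc ZMod.castHom hN (ZMod N) ((rep (q k N')).coeff i)
        = ((rep (q k N')).map (ZMod.castHom hN (ZMod N))).coeff i :=
          (Polynomial.coeff_map _ _).symm
      _ = (rep (qmap (ZMod.castHom hN (ZMod N)) k (q k N'))).coeff i := by rw [map_rep]
      _ = (rep (q k N)).coeff i := by rw [hqq]
  choose a haN using ha
  set G : ℕ+ → Polynomial ZHat :=
    fun k => ∑ i ∈ Finset.range (k : ℕ), Polynomial.monomial i (a k i) with hG_def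
  have hmapG : ∀ (k N : ℕ+), (G k).map (proj N) = rep (q k N) := by
    intro k N
    rcases subsingleton_or_nontrivial (ZMod N) with hS | hS
    · haveI : Subsingleton (Polynomial (ZMod N)) :=
        ⟨fun a b => by ext i; exact Subsingleton.elim _ _⟩
      exact Subsingleton.elim _ _
    · have hmap : (G k).map (proj N)
          = ∑ i ∈ Finset.range (k : ℕ), Polynomial.monomial i ((rep (q k N)).coeff i) := by
        rw [hG_def]
        rw [Polynomial.map_sum]
        refine Finset.sum_congr rfl fun i _ => ?_
        rw [Polynomial.map_monomial]
        congr 1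
        exact haN k i N
      rw [hmap]
      exact ((rep (q k N)).as_sum_range' (k : ℕ) (natDegree_rep_lt _)).symm
  have g_mem : (fun k => mkC ZHat k (G k)) ∈ CompletedCycRing ZHat := by
    intro k k' hk
    show cycTransition ZHat hk (mkC ZHat k' (G k')) = mkC ZHat k (G k)
    rw [cycTransition_mkC, mkC_eq_mkC_iff]
    apply dvd_of_forall_proj
    intro N
    rw [Polynomial.map_sub, hmapG, hmapG]
    have h2 : cycTransition (ZMod N) hk (q k' N) = q k N :=
      (Tmap_self_level hk dvd_rfl (q k' N)).symm.trans (hcompat k k' N N hk dvd_rfl)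
    have h3 : mkC (ZMod N) k (rep (q k' N)) = mkC (ZMod N) k (rep (q k N)) := by
      calc mkC (ZMod N) k (rep (q k' N))
          = cycTransition (ZMod N) hk (mkC (ZMod N) k' (rep (q k' N))) :=
            (cycTransition_mkC hk _).symm
        _ = cycTransition (ZMod N) hk (q k' N) := by rw [mkC_rep]
        _ = q k N := h2
        _ = mkC (ZMod N) k (rep (q k N)) := (mkC_rep _).symm
    exact (mkC_eq_mkC_iff _ _).mp h3
  refine ⟨⟨fun k => mkC ZHat k (G k), g_mem⟩, ?_⟩
  apply Subtype.ext
  funext k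
  show f.1 k = (intPolyEmb ZHat (cyclotomic (m : ℕ) ℤ)).1 k * mkC ZHat k (G k)
  obtain ⟨F, hF⟩ := mkC_surjective ZHat k (f.1 k)
  rw [intPolyEmb_apply_coe, ← hF]
  rw [← _root_.map_mul, mkC_eq_mkC_iff]
  apply dvd_of_forall_proj
  intro N
  rw [Polynomial.map_sub, Polynomial.map_mul, hmapG]
  have hΦN : (((cyclotomic (m : ℕ) ℤ).map (Int.castRingHom ZHat)).map (proj N))
      = (cyclotomic (m : ℕ) ℤ).map (Int.castRingHom (ZMod N)) := by
    rw [Polynomial.map_map]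
    have h6 : (proj N).comp (Int.castRingHom ZHat) = Int.castRingHom (ZMod N) :=
      RingHom.ext_int _ _
    rw [h6]
  rw [hΦN]
  have h4 : mkC (ZMod N) k (F.map (proj N))
      = mkC (ZMod N) k ((cyclotomic (m : ℕ) ℤ).map (Int.castRingHom (ZMod N)) * rep (q k N)) := by
    have h5 := hsol k N
    rw [← hF, qmap_mkC] at h5
    rw [_root_.map_mul, mkC_rep, ← h5, PhiQ]
  exact (mkC_eq_mkC_iff _ _).mp h4
end KerModPhiAux

/-- For every `m ≥ 1`, the kernel of the natural surjection
`mod Φ_m : Ẑ[[t^Ẑ]] → Ẑ[t]/(Φ_m(t))` equals the principal ideal generated by `Φ_m(t)`. -/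
theorem ker_modPhi_eq_span_cyclotomic_zhat (m : ℕ+) :
    RingHom.ker (modPhi ZHat m)
      = Ideal.span {intPolyEmb ZHat (cyclotomic (m : ℕ) ℤ)} := by
  apply le_antisymm
  · intro f hf
    rw [RingHom.mem_ker] at hf
    obtain ⟨g, hg⟩ := KerModPhiAux.main_construction m f hf
    exact Ideal.mem_span_singleton.mpr ⟨g, hg⟩
  · rw [Ideal.span_le, Set.singleton_subset_iff, SetLike.mem_coe, RingHom.mem_ker]
    have hmod : modPhi ZHat m (intPolyEmb ZHat (cyclotomic (m : ℕ) ℤ))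
        = Ideal.Quotient.mk (Ideal.span {cyclotomic (m : ℕ) ZHat})
            ((cyclotomic (m : ℕ) ℤ).map (Int.castRingHom ZHat)) := by
      show Ideal.Quotient.factor (Ideal.span_singleton_le_span_singleton.mpr
          (Polynomial.cyclotomic.dvd_X_pow_sub_one (m : ℕ) ZHat))
          ((intPolyEmb ZHat (cyclotomic (m : ℕ) ℤ)).1 m)
        = Ideal.Quotient.mk (Ideal.span {cyclotomic (m : ℕ) ZHat})
            ((cyclotomic (m : ℕ) ℤ).map (Int.castRingHom ZHat))
      rw [KerModPhiAux.intPolyEmb_apply_coe]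
      exact Ideal.Quotient.factor_mk _ _
    rw [hmod, Polynomial.map_cyclotomic_int]
    exact Ideal.Quotient.eq_zero_iff_mem.mpr (Ideal.subset_span rfl)
end
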